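/- A norm ⦀·⦀ on ℝ^d is orthant-monotonic if and only if it is increasing with the coordinate subspaces, i.e., for every x ∈ ℝ^d and all subsets J ⊆ K ⊆ {1,…,d} one has ⦀x_J⦀ ≤ ⦀x_K⦀. -/

import Mathlib

open Finset Set

namespace OSMPaper

variable {d : ℕ}

/-- Standard inner product on `ℝ^d = Fin d → ℝ`. -/
def dot (x y : Fin d → ℝ) : ℝ := ∑ i, x i * y i

/-- `N` is a norm on `ℝ^d`. -/
def IsNorm (N : (Fin d → ℝ) → ℝ) : Prop :=
  (∀ x, 0 ≤ N x) ∧ (∀ x, N x = 0 ↔ x = 0) ∧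
  (∀ (c : ℝ) (x : Fin d → ℝ), N (c • x) = |c| * N x) ∧
  (∀ x y, N (x + y) ≤ N x + N y)

/-- `proj K x = x_K`, the vector coinciding with `x` on `K` and zero outside `K`. -/
def proj (K : Finset (Fin d)) (x : Fin d → ℝ) : Fin d → ℝ :=
  fun i => if i ∈ K then x i else 0

/-- The coordinate subspace `ℝ_K`. -/
def coordSubspace (K : Finset (Fin d)) : Set (Fin d → ℝ) :=
  {x | ∀ j, j ∉ K → x j = 0}

/-- Orthant-monotonic norm. -/
def OrthantMonotonic (N : (Fin d → ℝ) → ℝ) : Prop :=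
  ∀ x x' : Fin d → ℝ, (∀ i, |x i| ≤ |x' i|) → (∀ i, 0 ≤ x i * x' i) → N x ≤ N x'

/-- Orthant-strictly monotonic norm. -/
def OrthantStrictlyMonotonic (N : (Fin d → ℝ) → ℝ) : Prop :=
  ∀ x x' : Fin d → ℝ, (∀ i, |x i| ≤ |x' i|) → (∃ j, |x j| < |x' j|) →
    (∀ i, 0 ≤ x i * x' i) → N x < N x'

/-- Dual norm `⦀y⦀⋆ = sup_{N x ≤ 1} ⟨x, y⟩`. -/
noncomputable def dualNorm (N : (Fin d → ℝ) → ℝ) (y : Fin d → ℝ) : ℝ :=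
  sSup {r | ∃ x, N x ≤ 1 ∧ r = dot x y}

/-- Support function of a set `S`. -/
noncomputable def suppFn (S : Set (Fin d → ℝ)) (y : Fin d → ℝ) : ℝ :=
  sSup {r | ∃ x ∈ S, r = dot x y}

/-- Generalized top-`k` norm associated with the source norm `N`. -/
noncomputable def topNorm (N : (Fin d → ℝ) → ℝ) (k : ℕ) (x : Fin d → ℝ) : ℝ :=
  sSup {r | ∃ K : Finset (Fin d), K.card ≤ k ∧ r = N (proj K x)}

/-- Generalized `k`-support norm: the dual norm of the generalized top-`k` norm. -/
noncomputable def supportNorm (N : (Fin d → ℝ) → ℝ) (k : ℕ) : (Fin d → ℝ) → ℝ :=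
  dualNorm (topNorm N k)

/-- The ℓ0 pseudonorm: the number of nonzero components. -/
noncomputable def l0 (x : Fin d → ℝ) : ℕ := Set.ncard {i | x i ≠ 0}

/-- `x` is an extreme point of the convex set `C`. -/
def ExtremePt (C : Set (Fin d → ℝ)) (x : Fin d → ℝ) : Prop :=
  x ∈ C ∧ ∀ y ∈ C, ∀ z ∈ C, ∀ t : ℝ, 0 < t → t < 1 →
    x = t • y + (1 - t) • z → y = x ∧ z = x

lemma step_lemma {d : ℕ} {N : (Fin d → ℝ) → ℝ} (hN : IsNorm N)
    (h : ∀ (x : Fin d → ℝ) (J K : Finset (Fin d)), J ⊆ K → N (proj J x) ≤ N (proj K x))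
    (u v : Fin d → ℝ) (i : Fin d) (hne : ∀ j, j ≠ i → u j = v j)
    (habs : |u i| ≤ |v i|) (hsg : 0 ≤ u i * v i) : N u ≤ N v := by
  obtain ⟨hpos, hzero, hsmul, htri⟩ := hN
  by_cases hv : v i = 0
  · have hui : u i = 0 := by
      have : |u i| ≤ 0 := by rwa [hv, abs_zero] at habs
      simpa using this
    have huv : u = v := funext fun j => by
      by_cases hj : j = i
      · subst hj; rw [hui, hv]
      · exact hne j hj
    rw [huv]
  · set t := u i / v i with ht
    have ht0 : 0 ≤ t := by
      rcases lt_or_gt_of_ne hv with hvneg | hvpos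
      · have hu0 : u i ≤ 0 := by nlinarith
        exact div_nonneg_of_nonpos hu0 hvneg.le
      · have hu0 : 0 ≤ u i := by nlinarith
        exact div_nonneg hu0 hvpos.le
    have ht1 : t ≤ 1 := by
      refine le_trans (le_abs_self t) ?_
      rw [ht, abs_div]
      exact div_le_one_of_le₀ habs (abs_nonneg _)
    have hu : u = t • v + (1 - t) • proj (Finset.univ.erase i) v := by
      funext j
      by_cases hj : j = i
      · subst hj
        simp only [Pi.add_apply, Pi.smul_apply, smul_eq_mul, proj,
          Finset.mem_erase, ne_eq, not_true_eq_false, false_and, if_false]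
        rw [ht]
        field_simp
        ring
      · have hjmem : j ∈ Finset.univ.erase i := by
          simp [Finset.mem_erase, hj]
        simp only [Pi.add_apply, Pi.smul_apply, smul_eq_mul, proj, hjmem, if_true,
          hne j hj]
        ring
    have hproj : N (proj (Finset.univ.erase i) v) ≤ N v := by
      have h1 := h v (Finset.univ.erase i) Finset.univ (Finset.subset_univ _)
      have hpv : proj Finset.univ v = v := funext fun j => by simp [proj]
      rwa [hpv] at h1
    calc N u ≤ N (t • v) + N ((1 - t) • proj (Finset.univ.erase i) v) := by
          rw [hu]; exact htri _ _
      _ = t * N v + (1 - t) * N (proj (Finset.univ.erase i) v) := by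
          rw [hsmul, hsmul, abs_of_nonneg ht0, abs_of_nonneg (by linarith)]
      _ ≤ t * N v + (1 - t) * N v := by
          have := mul_le_mul_of_nonneg_left hproj (by linarith : (0:ℝ) ≤ 1 - t)
          linarith
      _ = N v := by ring

/-- a norm is orthant-monotonic iff it is increasing with the
coordinate subspaces. -/
theorem orthantMonotonic_iff_increasing_with_coord_subspaces
    (hd : 0 < d) (N : (Fin d → ℝ) → ℝ) (hN : IsNorm N) :
    OrthantMonotonic N ↔
      ∀ (x : Fin d → ℝ) (J K : Finset (Fin d)), J ⊆ K →
        N (proj J x) ≤ N (proj K x) := by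
  constructor
  · intro hOM x J K hJK
    apply hOM
    · intro i
      by_cases hiJ : i ∈ J
      · simp [proj, hiJ, hJK hiJ]
      · simp [proj, hiJ]
    · intro i
      by_cases hiJ : i ∈ J
      · simp [proj, hiJ, hJK hiJ, mul_self_nonneg]
      · simp [proj, hiJ]
  · intro h x x' hle hsg
    have key : ∀ S : Finset (Fin d), N x ≤ N (fun i => if i ∈ S then x' i else x i) := by
      intro S
      induction S using Finset.induction_on with
      | empty => simp
      | @insert a S ha ih =>
        refine le_trans ih (step_lemma hN h _ _ a ?_ ?_ ?_)
        · intro j hj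
          simp [Finset.mem_insert, hj]
        · simp only [ha, if_false, Finset.mem_insert, if_true, or_true, true_or, if_pos rfl]
          simpa [ha] using hle a
        · simpa [ha] using hsg a
    have hkey := key Finset.univ
    simpa using hkey

end OSMPaper
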